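/- Let d ∈ U_k consist of t disjoint r-cycles, each permuting r blocks of equal size. Then there are exactly r^{t−1} ways to take unions of the blocks of d to obtain an element d' that is a single r-cycle with top(d') = bot(d'); moreover each block of d' is a disjoint union containing exactly one block from each of the t cycles of d. -/

import Mathlib

open Sum

/-- A set partition `d` of `[k] ∪ [k̄]` (encoded as a setoid on `Fin k ⊕ Fin k`,
top row = `inl`, bottom row = `inr`) is *uniform* if every block contains as many
top-row elements as bottom-row elements. -/
def IsUniform (k : ℕ) (d : Setoid (Fin k ⊕ Fin k)) : Prop :=
  ∀ x : Fin k ⊕ Fin k,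
    {a : Fin k | d.r (.inl a) x}.ncard = {b : Fin k | d.r (.inr b) x}.ncard

/-- Embedding of a two-row diagram into the top two rows of a three-row diagram. -/
def row12 (k : ℕ) : Fin k ⊕ Fin k → Fin k ⊕ (Fin k ⊕ Fin k) :=
  Sum.elim (fun a => .inl a) (fun b => .inr (.inl b))

/-- Embedding of a two-row diagram into the bottom two rows of a three-row diagram. -/
def row23 (k : ℕ) : Fin k ⊕ Fin k → Fin k ⊕ (Fin k ⊕ Fin k) :=
  Sum.elim (fun a => .inr (.inl a)) (fun b => .inr (.inr b))

/-- Embedding of a two-row diagram into the outer two rows of a three-row diagram. -/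
def row13 (k : ℕ) : Fin k ⊕ Fin k → Fin k ⊕ (Fin k ⊕ Fin k) :=
  Sum.elim (fun a => .inl a) (fun b => .inr (.inr b))

/-- The equivalence relation on the three-row vertex set generated by transporting
`d` along the embedding `f`. -/
def liftSetoid (k : ℕ) (f : Fin k ⊕ Fin k → Fin k ⊕ (Fin k ⊕ Fin k))
    (d : Setoid (Fin k ⊕ Fin k)) : Setoid (Fin k ⊕ (Fin k ⊕ Fin k)) :=
  Relation.EqvGen.setoid (fun x y => ∃ a b, d.r a b ∧ x = f a ∧ y = f b)

/-- The diagram product: stack `d` on top of `d'`, take connected components of the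
three-row diagram, and restrict to the outer rows. -/
def ubpMul {k : ℕ} (d d' : Setoid (Fin k ⊕ Fin k)) : Setoid (Fin k ⊕ Fin k) :=
  Setoid.comap (row13 k) (liftSetoid k (row12 k) d ⊔ liftSetoid k (row23 k) d')

/-- The identity diagram `{{1,1̄},…,{k,k̄}}`. -/
def ubpOne (k : ℕ) : Setoid (Fin k ⊕ Fin k) := Setoid.ker (Sum.elim id id)

/-- The set partition of `[k]` induced on the top row. -/
def topPart {k : ℕ} (d : Setoid (Fin k ⊕ Fin k)) : Setoid (Fin k) :=
  Setoid.comap Sum.inl d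

/-- The set partition of `[k]` induced on the bottom row. -/
def botPart {k : ℕ} (d : Setoid (Fin k ⊕ Fin k)) : Setoid (Fin k) :=
  Setoid.comap Sum.inr d

/-- The idempotent diagram `e_π = {A ∪ Ā : A ∈ π}` associated to a set partition `π` of `[k]`. -/
def ePart {k : ℕ} (π : Setoid (Fin k)) : Setoid (Fin k ⊕ Fin k) :=
  Setoid.comap (Sum.elim id id) π

/-- The diagram `{{i, σ(i)‾} : i ∈ [k]}` of a permutation `σ ∈ S_k`. -/
def permToUBP {k : ℕ} (σ : Equiv.Perm (Fin k)) : Setoid (Fin k ⊕ Fin k) :=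
  Setoid.ker (Sum.elim (fun i => σ i) id)

/-- The reflection `d̃` of a diagram across a horizontal line (swap barred/unbarred). -/
def reflectUBP {k : ℕ} (d : Setoid (Fin k ⊕ Fin k)) : Setoid (Fin k ⊕ Fin k) :=
  Setoid.comap Sum.swap d

/-- The image of a set `C ⊆ [k]` of top-row elements under the block bijection of `d`:
the set of bottom-row elements connected to some element of `C`. -/
def blockMap {k : ℕ} (d : Setoid (Fin k ⊕ Fin k)) (C : Set (Fin k)) : Set (Fin k) :=
  {j | ∃ i ∈ C, d.r (.inl i) (.inr j)}

section MergeAux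

private lemma finmk_succ {m : ℕ} (i : Fin (m + 1)) (h : ((i : ℕ) + 1) % (m + 1) < m + 1) :
    (⟨((i : ℕ) + 1) % (m + 1), h⟩ : Fin (m + 1)) = i + 1 := by
  ext; simp [Fin.val_add, Fin.val_one, Nat.add_mod]

/-- Block-index function determined by a shift vector `s`. -/
private def bIdx {k t m : ℕ} (I : Fin k → Fin (m + 1)) (C : Fin k → Fin t)
    (s : Fin t → Fin (m + 1)) (x : Fin k) : Fin (m + 1) :=
  I x + s (C x)

/-- The merged diagram associated to a shift vector `s`. -/
private def dS {k t m : ℕ} (I : Fin k → Fin (m + 1)) (C : Fin k → Fin t)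
    (s : Fin t → Fin (m + 1)) : Setoid (Fin k ⊕ Fin k) :=
  Setoid.ker (Sum.elim (bIdx I C s) (fun y => bIdx I C s y - 1))

private lemma dS_rel {k t m : ℕ} (I : Fin k → Fin (m + 1)) (C : Fin k → Fin t)
    (s : Fin t → Fin (m + 1)) (u v : Fin k ⊕ Fin k) :
    (dS I C s).r u v ↔
      Sum.elim (bIdx I C s) (fun y => bIdx I C s y - 1) u =
      Sum.elim (bIdx I C s) (fun y => bIdx I C s y - 1) v := Iff.rfl

end MergeAux
open scoped Fin.CommRing Fin.NatCast
/-- Let `d ∈ U_k` consist of `t` disjoint `r`-cycles: its blocks are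
`A c i ∪ (A c (i+1))‾` for `c : Fin t`, `i : Fin r`, where for each `c` the sets
`A c i` are nonempty, of equal size, and the `A c i` are pairwise disjoint and cover
`[k]`.  Then there are exactly `r^{t-1}` coarsenings `d'` of `d` that are single
`r`-cycles with `top(d') = bot(d')`, and each block of such a `d'` contains exactly
one block from each of the `t` cycles. -/
theorem merge_r_cycles_count (k t r : ℕ) (ht : 0 < t) (hr : 0 < r)
    (A : Fin t → Fin r → Set (Fin k))
    (hne : ∀ c i, (A c i).Nonempty)
    (hsize : ∀ c i j, (A c i).ncard = (A c j).ncard)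
    (hdisj : ∀ c i c' i', (c, i) ≠ (c', i') → Disjoint (A c i) (A c' i'))
    (hcover : ∀ x : Fin k, ∃ c i, x ∈ A c i)
    (d : Setoid (Fin k ⊕ Fin k))
    (hd : ∀ u v : Fin k ⊕ Fin k, d.r u v ↔ ∃ c : Fin t, ∃ i : Fin r,
      (Sum.elim (fun x => x ∈ A c i)
        (fun y => y ∈ A c ⟨((i : ℕ) + 1) % r, Nat.mod_lt _ hr⟩) u) ∧
      (Sum.elim (fun x => x ∈ A c i)
        (fun y => y ∈ A c ⟨((i : ℕ) + 1) % r, Nat.mod_lt _ hr⟩) v)) :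
    Nat.card {d' : Setoid (Fin k ⊕ Fin k) //
        d ≤ d' ∧ topPart d' = botPart d' ∧
        ∃ B : Fin r → Set (Fin k), Function.Injective B ∧
          (topPart d').classes = Set.range B ∧
          ∀ i : Fin r, blockMap d' (B i) = B ⟨((i : ℕ) + 1) % r, Nat.mod_lt _ hr⟩} =
      r ^ (t - 1) ∧
    ∀ d' : Setoid (Fin k ⊕ Fin k),
      d ≤ d' → topPart d' = botPart d' →
      (∃ B : Fin r → Set (Fin k), Function.Injective B ∧
        (topPart d').classes = Set.range B ∧
        ∀ i : Fin r, blockMap d' (B i) = B ⟨((i : ℕ) + 1) % r, Nat.mod_lt _ hr⟩) →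
      ∀ C ∈ (topPart d').classes, ∀ c : Fin t, ∃! i : Fin r, A c i ⊆ C := by
  obtain ⟨m, rfl⟩ := Nat.exists_eq_succ_of_ne_zero hr.ne'
  simp only [finmk_succ] at hd ⊢
  choose CC II hCI using hcover
  -- uniqueness of the block containing a point
  have hmemU : ∀ {x : Fin k} {c c' : Fin t} {i i' : Fin (m + 1)},
      x ∈ A c i → x ∈ A c' i' → c = c' ∧ i = i' := by
    intro x c c' i i' h h'
    by_contra hcc
    refine Set.disjoint_left.mp (hdisj c i c' i' fun he => ?_) h h'
    rw [Prod.mk.injEq] at he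
    exact hcc ⟨he.1, he.2⟩
  have hidx : ∀ (s : Fin t → Fin (m + 1)) {x : Fin k} {c : Fin t} {i : Fin (m + 1)},
      x ∈ A c i → bIdx II CC s x = i + s c := by
    intro s x c i hx
    obtain ⟨hc, hi⟩ := hmemU (hCI x) hx
    rw [bIdx, hi, hc]
  set c₀ : Fin t := ⟨0, ht⟩ with hc₀
  have hsurj : ∀ (s : Fin t → Fin (m + 1)) (j : Fin (m + 1)), ∃ x, bIdx II CC s x = j := by
    intro s j
    obtain ⟨x, hx⟩ := hne c₀ (j - s c₀)
    exact ⟨x, by rw [hidx s hx, sub_add_cancel]⟩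
  -- d ≤ dS s
  have hle : ∀ s : Fin t → Fin (m + 1), d ≤ dS II CC s := by
    intro s
    rw [Setoid.le_def]
    intro u v huv
    rw [hd] at huv
    obtain ⟨c, i, hu, hv⟩ := huv
    have key : ∀ w, Sum.elim (fun x => x ∈ A c i) (fun y => y ∈ A c (i + 1)) w →
        Sum.elim (bIdx II CC s) (fun y => bIdx II CC s y - 1) w = i + s c := by
      rintro (x | y) hw
      · simp only [Sum.elim_inl] at hw ⊢
        exact hidx s hw
      · simp only [Sum.elim_inr] at hw ⊢
        rw [hidx s hw]; ring
    show Sum.elim (bIdx II CC s) (fun y => bIdx II CC s y - 1) u =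
      Sum.elim (bIdx II CC s) (fun y => bIdx II CC s y - 1) v
    rw [key u hu, key v hv]
  -- top = bot for dS s
  have htb : ∀ s : Fin t → Fin (m + 1), topPart (dS II CC s) = botPart (dS II CC s) := by
    intro s
    refine Setoid.ext fun a b => ?_
    show bIdx II CC s a = bIdx II CC s b ↔ bIdx II CC s a - 1 = bIdx II CC s b - 1
    constructor
    · intro h; rw [h]
    · exact fun h => by linear_combination h
  -- witness B for dS s
  have hwit : ∀ s : Fin t → Fin (m + 1),
      ∃ B : Fin (m + 1) → Set (Fin k), Function.Injective B ∧
        (topPart (dS II CC s)).classes = Set.range B ∧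
        ∀ i : Fin (m + 1), blockMap (dS II CC s) (B i) = B (i + 1) := by
    intro s
    refine ⟨fun i => {x | bIdx II CC s x = i}, ?_, ?_, ?_⟩
    · intro i i' h
      obtain ⟨x, hx⟩ := hsurj s i
      have hx' : bIdx II CC s x = i' := (Set.ext_iff.mp h x).mp hx
      rw [← hx, hx']
    · ext S
      constructor
      · rintro ⟨y, rfl⟩
        exact ⟨bIdx II CC s y, rfl⟩
      · rintro ⟨i, rfl⟩
        obtain ⟨y, hy⟩ := hsurj s i
        exact ⟨y, Set.ext fun x => by
          show bIdx II CC s x = i ↔ bIdx II CC s x = bIdx II CC s y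
          rw [hy]⟩
    · intro i
      ext j
      constructor
      · rintro ⟨x, hx1, hx2⟩
        have hx2' : bIdx II CC s x = bIdx II CC s j - 1 := hx2
        have : bIdx II CC s j - 1 = i := hx2' ▸ hx1
        show bIdx II CC s j = i + 1
        linear_combination this
      · intro hj
        have hj' : bIdx II CC s j = i + 1 := hj
        obtain ⟨x, hx⟩ := hsurj s i
        exact ⟨x, hx, show bIdx II CC s x = bIdx II CC s j - 1 by rw [hx, hj']; ring⟩
  -- distinct B-blocks are disjoint
  have hBdisj : ∀ (d' : Setoid (Fin k ⊕ Fin k)) (B : Fin (m + 1) → Set (Fin k)),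
      Function.Injective B → (topPart d').classes = Set.range B →
      ∀ {x : Fin k} {a b : Fin (m + 1)}, x ∈ B a → x ∈ B b → a = b := by
    intro d' B hBinj hBcl x a b hxa hxb
    have hpa : B a ∈ (topPart d').classes := hBcl ▸ ⟨a, rfl⟩
    have hpb : B b ∈ (topPart d').classes := hBcl ▸ ⟨b, rfl⟩
    obtain ⟨-, hP⟩ := Setoid.isPartition_classes (topPart d')
    exact hBinj ((hP x).unique ⟨hpa, hxa⟩ ⟨hpb, hxb⟩)
  -- extraction of the shift structure from a merged diagram
  have hback : ∀ (d' : Setoid (Fin k ⊕ Fin k)), d ≤ d' →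
      ∀ (B : Fin (m + 1) → Set (Fin k)), Function.Injective B →
      (topPart d').classes = Set.range B →
      (∀ i : Fin (m + 1), blockMap d' (B i) = B (i + 1)) →
      ∃ σ : Fin t → Fin (m + 1) → Fin (m + 1),
        (∀ c i, A c i ⊆ B (σ c i)) ∧ (∀ c i, σ c i = σ c 0 + i) := by
    intro d' hled' B hBinj hBcl hBmap
    have hex : ∀ (c : Fin t) (i : Fin (m + 1)), ∃ j, ∀ y ∈ A c i, y ∈ B j := by
      intro c i
      obtain ⟨x₀, hx₀⟩ := hne c i
      have hcl : {z | (topPart d') z x₀} ∈ (topPart d').classes := ⟨x₀, rfl⟩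
      rw [hBcl] at hcl
      obtain ⟨j, hj⟩ := hcl
      refine ⟨j, fun y hy => ?_⟩
      rw [hj]
      show (topPart d') y x₀
      exact Setoid.le_def.mp hled' ((hd _ _).mpr ⟨c, i, hy, hx₀⟩)
    choose σ hσ using hex
    have hstep : ∀ c i, σ c (i + 1) = σ c i + 1 := by
      intro c i
      obtain ⟨x₀, hx₀⟩ := hne c i
      obtain ⟨y₀, hy₀⟩ := hne c (i + 1)
      have h1 : y₀ ∈ B (σ c (i + 1)) := hσ c (i + 1) y₀ hy₀
      have h2 : y₀ ∈ blockMap d' (B (σ c i)) :=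
        ⟨x₀, hσ c i x₀ hx₀, Setoid.le_def.mp hled' ((hd _ _).mpr ⟨c, i, hx₀, hy₀⟩)⟩
      rw [hBmap] at h2
      exact hBdisj d' B hBinj hBcl h1 h2
    have hnat : ∀ (n : ℕ) (c : Fin t), σ c ((n : Fin (m + 1))) = σ c 0 + (n : Fin (m + 1)) := by
      intro n c
      induction n with
      | zero => simp
      | succ n ih =>
        push_cast
        rw [hstep c (n : Fin (m + 1)), ih]
        ring
    refine ⟨σ, hσ, fun c i => ?_⟩
    have := hnat (i : ℕ) c
    rwa [Fin.cast_val_eq_self] at this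
  -- injectivity of s ↦ dS s on normalized shifts
  have hSinj : ∀ s s' : Fin t → Fin (m + 1), s c₀ = 0 → s' c₀ = 0 →
      dS II CC s = dS II CC s' → s = s' := by
    intro s s' hs hs' hEq
    funext c
    obtain ⟨x, hx⟩ := hne c 0
    obtain ⟨y, hy⟩ := hne c₀ (s c)
    have h1 : (dS II CC s).r (inl x) (inl y) := by
      show bIdx II CC s x = bIdx II CC s y
      rw [hidx s hx, hidx s hy, hs, zero_add, add_zero]
    rw [hEq] at h1
    have h2 : bIdx II CC s' x = bIdx II CC s' y := h1
    rw [hidx s' hx, hidx s' hy, hs', zero_add, add_zero] at h2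
    exact h2.symm
  -- surjectivity
  have hSsurj : ∀ (d' : Setoid (Fin k ⊕ Fin k)), d ≤ d' → topPart d' = botPart d' →
      (∃ B : Fin (m + 1) → Set (Fin k), Function.Injective B ∧
        (topPart d').classes = Set.range B ∧
        ∀ i : Fin (m + 1), blockMap d' (B i) = B (i + 1)) →
      ∃ s : Fin t → Fin (m + 1), s c₀ = 0 ∧ dS II CC s = d' := by
    rintro d' hled' htbd' ⟨B, hBinj, hBcl, hBmap⟩
    obtain ⟨σ, hσA, hσlin⟩ := hback d' hled' B hBinj hBcl hBmap
    refine ⟨fun c => σ c 0 - σ c₀ 0, sub_self _, ?_⟩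
    set s : Fin t → Fin (m + 1) := fun c => σ c 0 - σ c₀ 0 with hsdef
    have hjb : ∀ x : Fin k, x ∈ B (σ (CC x) (II x)) := fun x => hσA _ _ (hCI x)
    have hmem : ∀ {x : Fin k} {j}, x ∈ B j → j = σ (CC x) (II x) :=
      fun hx => hBdisj d' B hBinj hBcl hx (hjb _)
    have htopc : ∀ x y : Fin k, (topPart d') x y ↔
        σ (CC x) (II x) = σ (CC y) (II y) := by
      intro x y
      constructor
      · intro h
        have hcl : {z | (topPart d') z y} ∈ (topPart d').classes := ⟨y, rfl⟩
        rw [hBcl] at hcl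
        obtain ⟨j, hj⟩ := hcl
        have hxj : x ∈ B j := by rw [hj]; exact h
        have hyj : y ∈ B j := by rw [hj]; exact Setoid.refl' (topPart d') y
        exact (hmem hxj).symm.trans (hmem hyj)
      · intro h
        have hx : x ∈ B (σ (CC y) (II y)) := by rw [← h]; exact hjb x
        have hcls : B (σ (CC y) (II y)) ∈ (topPart d').classes := hBcl ▸ ⟨_, rfl⟩
        obtain ⟨w, hw⟩ := hcls
        have hxw : (topPart d') x w := by rw [hw] at hx; exact hx
        have hyw : (topPart d') y w := by have h2 := hjb y; rw [hw] at h2; exact h2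
        exact Setoid.trans' _ hxw (Setoid.symm' _ hyw)
    have hmixc : ∀ x y : Fin k, d' (inl x) (inr y) ↔
        σ (CC y) (II y) = σ (CC x) (II x) + 1 := by
      intro x y
      constructor
      · intro h
        have h2 : y ∈ blockMap d' (B (σ (CC x) (II x))) := ⟨x, hjb x, h⟩
        rw [hBmap] at h2
        exact (hmem h2).symm
      · intro h
        have h2 : y ∈ B (σ (CC x) (II x) + 1) := by rw [← h]; exact hjb y
        rw [← hBmap] at h2
        obtain ⟨x', hx', hrel⟩ := h2
        have hxx' : (topPart d') x x' := (htopc x x').mpr (hmem hx')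
        exact Setoid.trans' d' hxx' hrel
    have hbotc : ∀ x y : Fin k, d' (inr x) (inr y) ↔
        σ (CC x) (II x) = σ (CC y) (II y) := by
      intro x y
      have h2 : (botPart d') x y ↔ σ (CC x) (II x) = σ (CC y) (II y) := by
        rw [← htbd']; exact htopc x y
      exact h2
    have hbx : ∀ x : Fin k, bIdx II CC s x = σ (CC x) (II x) - σ c₀ 0 := by
      intro x
      show II x + (σ (CC x) 0 - σ c₀ 0) = σ (CC x) (II x) - σ c₀ 0
      rw [hσlin (CC x) (II x)]
      ring
    have key : ∀ x y : Fin k, bIdx II CC s x = bIdx II CC s y ↔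
        σ (CC x) (II x) = σ (CC y) (II y) := by
      intro x y
      rw [hbx, hbx]
      constructor <;> intro h <;> linear_combination h
    have key2 : ∀ x y : Fin k, bIdx II CC s x = bIdx II CC s y - 1 ↔
        σ (CC y) (II y) = σ (CC x) (II x) + 1 := by
      intro x y
      rw [hbx, hbx]
      constructor <;> intro h <;> linear_combination -h
    refine Setoid.ext fun u v => ?_
    obtain (x | x) := u <;> obtain (y | y) := v
    · exact ((key x y).trans (htopc x y).symm : _)
    · exact ((key2 x y).trans (hmixc x y).symm : _)
    · show bIdx II CC s x - 1 = bIdx II CC s y ↔ d' (inr x) (inl y)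
      exact (eq_comm.trans (key2 y x)).trans
        ((Setoid.comm' d').trans (hmixc y x)).symm
    · show bIdx II CC s x - 1 = bIdx II CC s y - 1 ↔ d' (inr x) (inr y)
      exact (sub_left_inj.trans (key x y)).trans (hbotc x y).symm
  constructor
  · -- the count
    have hcard : Nat.card {s : Fin t → Fin (m + 1) // s c₀ = 0} = (m + 1) ^ (t - 1) := by
      have e2 : {s : Fin t → Fin (m + 1) // s c₀ = 0} ≃
          ({c : Fin t // c ≠ c₀} → Fin (m + 1)) :=
        { toFun := fun s c => s.1 c.1
          invFun := fun g => ⟨fun c => if h : c = c₀ then 0 else g ⟨c, h⟩, by simp⟩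
          left_inv := by
            rintro ⟨s, hs⟩
            ext c
            by_cases h : c = c₀
            · subst h; simp [hs]
            · simp [h]
          right_inv := by
            intro g
            funext c
            simp [c.2] }
      rw [Nat.card_congr e2, Nat.card_eq_fintype_card, Fintype.card_fun]
      have h1 : Fintype.card {c : Fin t // c ≠ c₀} = t - 1 := by
        simp only [ne_eq]
        rw [Fintype.card_subtype_compl, Fintype.card_subtype_eq, Fintype.card_fin]
      rw [h1, Fintype.card_fin]
    let Φ : {s : Fin t → Fin (m + 1) // s c₀ = 0} →
        {d' : Setoid (Fin k ⊕ Fin k) //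
          d ≤ d' ∧ topPart d' = botPart d' ∧
          ∃ B : Fin (m + 1) → Set (Fin k), Function.Injective B ∧
            (topPart d').classes = Set.range B ∧
            ∀ i : Fin (m + 1), blockMap d' (B i) = B (i + 1)} :=
      fun s => ⟨dS II CC s.1, hle s.1, htb s.1, hwit s.1⟩
    have hbij : Function.Bijective Φ := by
      constructor
      · intro s s' h
        exact Subtype.ext (hSinj _ _ s.2 s'.2 (Subtype.ext_iff.mp h))
      · rintro ⟨d', hled', htbd', hBex⟩
        obtain ⟨s, hs0, hsd⟩ := hSsurj d' hled' htbd' hBex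
        exact ⟨⟨s, hs0⟩, Subtype.ext hsd⟩
    rw [← Nat.card_eq_of_bijective Φ hbij, hcard]
  · -- each class contains exactly one block of each cycle
    rintro d' hled' htbd' ⟨B, hBinj, hBcl, hBmap⟩ C hC c
    obtain ⟨σ, hσA, hσlin⟩ := hback d' hled' B hBinj hBcl hBmap
    rw [hBcl] at hC
    obtain ⟨j0, rfl⟩ := hC
    refine ⟨j0 - σ c 0, ?_, ?_⟩
    · have h1 : σ c (j0 - σ c 0) = j0 := by rw [hσlin]; ring
      have h2 := hσA c (j0 - σ c 0)
      rwa [h1] at h2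
    · intro i' hi'
      obtain ⟨x, hx⟩ := hne c i'
      have h1 : x ∈ B (σ c i') := hσA c i' hx
      have h2 : σ c i' = j0 := hBdisj d' B hBinj hBcl h1 (hi' hx)
      rw [hσlin] at h2
      linear_combination h2
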